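/- arXiv:1909.01850 — 2 statements merged into one kernel-verified Lean document; each statement's English description precedes it below -/
import Mathlib

section
/- Let F be a finite field, V a 2n-dimensional F-vector space, and fix subspaces V₁, V₂ of dimension n with V = V₁ ⊕ V₂. Consider triples consisting of the pair (V₁, V₂) together with an n-dimensional subspace W ⊆ V, with GL(V) acting simultaneously on all three subspaces. Two n-dimensional subspaces W, W′ lie in the same orbit of the simultaneous stabilizer of V₁ and V₂ in GL(V) if and only if dim(W ∩ V₁) = dim(W′ ∩ V₁) and dim(W ∩ V₂) = dim(W′ ∩ V₂). Moreover, a pair (r, s) of natural numbers arises as (dim(W ∩ V₁), dim(W ∩ V₂)) for some n-dimensional W if and only if r + s ≤ n. -/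
open Module Submodule Set

noncomputable section AuxStmt5

variable {F : Type*} [Field F] {V : Type*} [AddCommGroup V] [Module F V]

/-- The family of vectors spanning `W` built from an adapted basis. -/
def wfam5 {r s t : ℕ} (B : ((Fin r ⊕ Fin t ⊕ Fin s) ⊕ (Fin s ⊕ Fin t ⊕ Fin r)) → V) :
    (Fin r ⊕ Fin s ⊕ Fin t) → V :=
  Sum.elim (fun i => B (.inl (.inl i)))
    (Sum.elim (fun j => B (.inr (.inl j)))
      (fun k => B (.inl (.inr (.inl k))) + B (.inr (.inr (.inl k)))))

section Repr

variable {r s t : ℕ}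
  (B : Basis ((Fin r ⊕ Fin t ⊕ Fin s) ⊕ (Fin s ⊕ Fin t ⊕ Fin r)) F V)
  (c : (Fin r ⊕ Fin s ⊕ Fin t) → F)

lemma repr_sum_apply5 (ℓ) :
    B.repr (∑ i, c i • wfam5 ⇑B i) ℓ = ∑ i, c i * B.repr (wfam5 ⇑B i) ℓ := by
  simp [Finsupp.finset_sum_apply]

lemma coeff_a5 (i : Fin r) :
    B.repr (∑ x, c x • wfam5 ⇑B x) (.inl (.inl i)) = c (.inl i) := by
  rw [repr_sum_apply5]
  simp [wfam5, Fintype.sum_sum_type, Basis.repr_self, Finsupp.single_apply]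

lemma coeff_b5 (j : Fin s) :
    B.repr (∑ x, c x • wfam5 ⇑B x) (.inr (.inl j)) = c (.inr (.inl j)) := by
  rw [repr_sum_apply5]
  simp [wfam5, Fintype.sum_sum_type, Basis.repr_self, Finsupp.single_apply]

lemma coeff_c5 (k : Fin t) :
    B.repr (∑ x, c x • wfam5 ⇑B x) (.inl (.inr (.inl k))) = c (.inr (.inr k)) := by
  rw [repr_sum_apply5]
  simp [wfam5, Fintype.sum_sum_type, Basis.repr_self, Finsupp.single_apply]

lemma li_wfam5 : LinearIndependent F (wfam5 ⇑B) := by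
  rw [Fintype.linearIndependent_iff]
  intro c hc
  have h : ∀ ℓ, B.repr (∑ x, c x • wfam5 ⇑B x) ℓ = 0 := by
    intro ℓ; rw [hc]; simp
  rintro (i | j | k)
  · have := h (.inl (.inl i)); rwa [coeff_a5] at this
  · have := h (.inr (.inl j)); rwa [coeff_b5] at this
  · have := h (.inl (.inr (.inl k))); rwa [coeff_c5] at this

lemma coeff_c5' (k : Fin t) :
    B.repr (∑ x, c x • wfam5 ⇑B x) (.inr (.inr (.inl k))) = c (.inr (.inr k)) := by
  rw [repr_sum_apply5]
  simp [wfam5, Fintype.sum_sum_type, Basis.repr_self, Finsupp.single_apply]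

end Repr

section Inf

variable {r s t : ℕ}
  (B : Basis ((Fin r ⊕ Fin t ⊕ Fin s) ⊕ (Fin s ⊕ Fin t ⊕ Fin r)) F V)

lemma span_wfam_inf_left5 :
    span F (range (wfam5 ⇑B)) ⊓ span F (range (⇑B ∘ Sum.inl)) =
      span F (range fun i : Fin r => B (.inl (.inl i))) := by
  apply le_antisymm
  · intro x hx
    rw [mem_inf] at hx
    obtain ⟨hxW, hxV⟩ := hx
    obtain ⟨c, rfl⟩ := (mem_span_range_iff_exists_fun F).mp hxW
    rw [Set.range_comp, Basis.mem_span_image] at hxV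
    have hz : ∀ ℓ ∉ range (Sum.inl : _ → (Fin r ⊕ Fin t ⊕ Fin s) ⊕ (Fin s ⊕ Fin t ⊕ Fin r)),
        B.repr (∑ x, c x • wfam5 ⇑B x) ℓ = 0 := by
      intro ℓ hℓ
      by_contra hne
      exact hℓ (hxV (Finsupp.mem_support_iff.mpr hne))
    have hb : ∀ j : Fin s, c (.inr (.inl j)) = 0 := by
      intro j
      have := hz (.inr (.inl j)) (by simp)
      rwa [coeff_b5] at this
    have hcz : ∀ k : Fin t, c (.inr (.inr k)) = 0 := by
      intro k
      have := hz (.inr (.inr (.inl k))) (by simp)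
      rwa [coeff_c5'] at this
    have hx : ∑ x, c x • wfam5 ⇑B x = ∑ i : Fin r, c (.inl i) • B (.inl (.inl i)) := by
      rw [Fintype.sum_sum_type, Fintype.sum_sum_type]
      simp only [wfam5, Sum.elim_inl, Sum.elim_inr]
      have e1 : ∀ j : Fin s, c (.inr (.inl j)) • B (.inr (.inl j)) = 0 :=
        fun j => by rw [hb j, zero_smul]
      have e2 : ∀ k : Fin t,
          c (.inr (.inr k)) • (B (.inl (.inr (.inl k))) + B (.inr (.inr (.inl k)))) = 0 :=
        fun k => by rw [hcz k, zero_smul]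
      simp [e1, e2]
    rw [hx]
    exact sum_mem fun i _ => smul_mem _ _ (subset_span (mem_range_self i))
  · intro x hx
    obtain ⟨c, rfl⟩ := (mem_span_range_iff_exists_fun F).mp hx
    refine mem_inf.mpr ⟨sum_mem fun i _ => smul_mem _ _ (subset_span ⟨.inl i, rfl⟩), ?_⟩
    exact sum_mem fun i _ => smul_mem _ _ (subset_span ⟨.inl i, rfl⟩)

lemma span_wfam_inf_right5 :
    span F (range (wfam5 ⇑B)) ⊓ span F (range (⇑B ∘ Sum.inr)) =
      span F (range fun j : Fin s => B (.inr (.inl j))) := by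
  apply le_antisymm
  · intro x hx
    rw [mem_inf] at hx
    obtain ⟨hxW, hxV⟩ := hx
    obtain ⟨c, rfl⟩ := (mem_span_range_iff_exists_fun F).mp hxW
    rw [Set.range_comp, Basis.mem_span_image] at hxV
    have hz : ∀ ℓ ∉ range (Sum.inr : _ → (Fin r ⊕ Fin t ⊕ Fin s) ⊕ (Fin s ⊕ Fin t ⊕ Fin r)),
        B.repr (∑ x, c x • wfam5 ⇑B x) ℓ = 0 := by
      intro ℓ hℓ
      by_contra hne
      exact hℓ (hxV (Finsupp.mem_support_iff.mpr hne))
    have ha : ∀ i : Fin r, c (.inl i) = 0 := by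
      intro i
      have := hz (.inl (.inl i)) (by simp)
      rwa [coeff_a5] at this
    have hcz : ∀ k : Fin t, c (.inr (.inr k)) = 0 := by
      intro k
      have := hz (.inl (.inr (.inl k))) (by simp)
      rwa [coeff_c5] at this
    have hx : ∑ x, c x • wfam5 ⇑B x = ∑ j : Fin s, c (.inr (.inl j)) • B (.inr (.inl j)) := by
      rw [Fintype.sum_sum_type, Fintype.sum_sum_type]
      simp only [wfam5, Sum.elim_inl, Sum.elim_inr]
      have e1 : ∀ i : Fin r, c (.inl i) • B (.inl (.inl i)) = 0 :=
        fun i => by rw [ha i, zero_smul]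
      have e2 : ∀ k : Fin t,
          c (.inr (.inr k)) • (B (.inl (.inr (.inl k))) + B (.inr (.inr (.inl k)))) = 0 :=
        fun k => by rw [hcz k, zero_smul]
      simp [e1, e2]
    rw [hx]
    exact sum_mem fun j _ => smul_mem _ _ (subset_span (mem_range_self j))
  · intro x hx
    obtain ⟨c, rfl⟩ := (mem_span_range_iff_exists_fun F).mp hx
    refine mem_inf.mpr ⟨sum_mem fun j _ => smul_mem _ _ (subset_span ⟨.inr (.inl j), rfl⟩), ?_⟩
    exact sum_mem fun j _ => smul_mem _ _ (subset_span ⟨.inl j, rfl⟩)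

lemma dims_of_adapted5 :
    finrank F (span F (range (wfam5 ⇑B))) = r + s + t ∧
    finrank F ↥(span F (range (wfam5 ⇑B)) ⊓ span F (range (⇑B ∘ Sum.inl))) = r ∧
    finrank F ↥(span F (range (wfam5 ⇑B)) ⊓ span F (range (⇑B ∘ Sum.inr))) = s := by
  refine ⟨?_, ?_, ?_⟩
  · rw [finrank_span_eq_card (li_wfam5 B)]
    simp [Nat.add_assoc]
  · have hli : LinearIndependent F fun i : Fin r => B (.inl (.inl i)) :=
      B.linearIndependent.comp
        (Sum.inl ∘ Sum.inl) (Sum.inl_injective.comp Sum.inl_injective)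
    rw [span_wfam_inf_left5, finrank_span_eq_card hli]
    simp
  · have hli : LinearIndependent F fun j : Fin s => B (.inr (.inl j)) :=
      B.linearIndependent.comp
        (Sum.inr ∘ Sum.inl) (Sum.inr_injective.comp Sum.inl_injective)
    rw [span_wfam_inf_right5, finrank_span_eq_card hli]
    simp

end Inf

section Build

variable [FiniteDimensional F V]

lemma coe_basis_span5 {ι : Type*} {p : Submodule F V} (b : Basis ι F ↥p) :
    LinearIndependent F (fun i => (b i : V)) ∧ span F (range fun i => (b i : V)) = p := by
  constructor
  · exact b.linearIndependent.map' p.subtype (ker_subtype p)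
  · have h : (range fun i => (b i : V)) = p.subtype '' (range b) := by
      rw [← range_comp]; rfl
    rw [h, ← Submodule.map_span, b.span_eq, Submodule.map_top, range_subtype]

lemma combine_basis5 {ι₁ ι₂ : Type*} {V₁ V₂ : Submodule F V} (hc : IsCompl V₁ V₂)
    (f₁ : ι₁ → V) (f₂ : ι₂ → V) (li₁ : LinearIndependent F f₁) (li₂ : LinearIndependent F f₂)
    (sp₁ : span F (range f₁) = V₁) (sp₂ : span F (range f₂) = V₂) :
    ∃ B : Basis (ι₁ ⊕ ι₂) F V, ⇑B = Sum.elim f₁ f₂ := by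
  have hli : LinearIndependent F (Sum.elim f₁ f₂) :=
    li₁.sum_type li₂ (by rw [sp₁, sp₂]; exact hc.disjoint)
  have hsp : ⊤ ≤ span F (range (Sum.elim f₁ f₂)) := by
    rw [Set.Sum.elim_range, span_union, sp₁, sp₂, hc.sup_eq_top]
  exact ⟨Basis.mk hli hsp, Basis.coe_mk _ _⟩

lemma exists_adapted5 {r s t : ℕ} {V₁ V₂ : Submodule F V} (hc : IsCompl V₁ V₂)
    (h₁ : finrank F V₁ = r + (t + s)) (h₂ : finrank F V₂ = s + (t + r)) :
    ∃ B : Basis ((Fin r ⊕ Fin t ⊕ Fin s) ⊕ (Fin s ⊕ Fin t ⊕ Fin r)) F V,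
      span F (range (⇑B ∘ Sum.inl)) = V₁ ∧ span F (range (⇑B ∘ Sum.inr)) = V₂ := by
  let e₁ : (Fin r ⊕ Fin t ⊕ Fin s) ≃ Fin (r + (t + s)) :=
    (Equiv.sumCongr (Equiv.refl _) finSumFinEquiv).trans finSumFinEquiv
  let e₂ : (Fin s ⊕ Fin t ⊕ Fin r) ≃ Fin (s + (t + r)) :=
    (Equiv.sumCongr (Equiv.refl _) finSumFinEquiv).trans finSumFinEquiv
  let b₁ := (Module.finBasisOfFinrankEq F ↥V₁ h₁).reindex e₁.symm
  let b₂ := (Module.finBasisOfFinrankEq F ↥V₂ h₂).reindex e₂.symm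
  obtain ⟨li₁, sp₁⟩ := coe_basis_span5 b₁
  obtain ⟨li₂, sp₂⟩ := coe_basis_span5 b₂
  obtain ⟨B, hB⟩ := combine_basis5 hc _ _ li₁ li₂ sp₁ sp₂
  refine ⟨B, ?_, ?_⟩
  · rw [show ⇑B ∘ Sum.inl = fun i => (b₁ i : V) by funext i; rw [hB]; rfl, sp₁]
  · rw [show ⇑B ∘ Sum.inr = fun i => (b₂ i : V) by funext i; rw [hB]; rfl, sp₂]

lemma li_proj5 {V₁ V₂ W : Submodule F V} (hc : IsCompl V₁ V₂)
    {ra tt : ℕ} {a : Fin ra → V} {c : Fin tt → V}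
    (haspan : span F (range a) = W ⊓ V₁) (hali : LinearIndependent F a)
    (hcW : ∀ k, c k ∈ W) (hcli : LinearIndependent F c)
    (hdisj : Disjoint ((W ⊓ V₁) ⊔ (W ⊓ V₂)) (span F (range c))) :
    LinearIndependent F (Sum.elim a fun k => ((V₁.linearProjOfIsCompl V₂ hc) (c k) : V)) := by
  set p := V₁.linearProjOfIsCompl V₂ hc with hp
  rw [Fintype.linearIndependent_iff]
  intro g hg
  have haV₁ : ∀ i, a i ∈ W ⊓ V₁ := fun i => haspan ▸ subset_span (mem_range_self i)
  rw [Fintype.sum_sum_type] at hg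
  simp only [Sum.elim_inl, Sum.elim_inr] at hg
  set w := ∑ i, g (.inl i) • a i + ∑ k, g (.inr k) • c k with hw
  have h1 : ∀ i, ((p (a i) : V)) = a i := fun i =>
    congrArg Subtype.val (Submodule.linearProjOfIsCompl_apply_left hc ⟨a i, (haV₁ i).2⟩)
  have hpw : ((p w : V)) = ∑ i, g (.inl i) • a i + ∑ k, g (.inr k) • (p (c k) : V) := by
    rw [hw, map_add, map_sum, map_sum]
    push_cast
    simp only [map_smul]
    push_cast
    simp [h1]
  have hpw0 : p w = 0 := by
    apply Subtype.ext
    rw [hpw]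
    simpa using hg
  have hwV₂ : w ∈ V₂ := by
    rw [← Submodule.linearProjOfIsCompl_ker hc]
    exact LinearMap.mem_ker.mpr hpw0
  have hwW : w ∈ W :=
    add_mem (sum_mem fun i _ => smul_mem _ _ (haV₁ i).1)
      (sum_mem fun k _ => smul_mem _ _ (hcW k))
  have hy : ∑ k, g (.inr k) • c k ∈ span F (range c) :=
    sum_mem fun k _ => smul_mem _ _ (subset_span (mem_range_self k))
  have hy2 : ∑ k, g (.inr k) • c k ∈ (W ⊓ V₁) ⊔ (W ⊓ V₂) := by
    have he : ∑ k, g (.inr k) • c k = w - ∑ i, g (.inl i) • a i := by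
      rw [hw]; abel
    rw [he]
    refine sub_mem (mem_sup_right (mem_inf.mpr ⟨hwW, hwV₂⟩)) (mem_sup_left ?_)
    exact haspan ▸ sum_mem fun i _ => smul_mem _ _ (subset_span (mem_range_self i))
  have hy0 : ∑ k, g (.inr k) • c k = 0 :=
    (Submodule.disjoint_def.mp hdisj) _ hy2 hy
  have hgr : ∀ k, g (.inr k) = 0 := Fintype.linearIndependent_iff.mp hcli _ hy0
  have hga : ∑ i, g (.inl i) • a i = 0 := by
    have : ∑ k, g (.inr k) • (p (c k) : V) = 0 := by
      apply Finset.sum_eq_zero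
      intro k _
      rw [hgr k, zero_smul]
    rw [this, add_zero] at hg
    exact hg
  have hgl := Fintype.linearIndependent_iff.mp hali _ hga
  rintro (i | k)
  exacts [hgl i, hgr k]

/-- A complement inside a submodule, viewed in the ambient space. -/
lemma compl_in_sub5 {W X : Submodule F V} (hXW : X ≤ W) {m : ℕ}
    (hfr : finrank F X + m = finrank F W) :
    ∃ Y : Submodule F V, Y ≤ W ∧ finrank F Y = m ∧ Disjoint X Y ∧ X ⊔ Y = W := by
  obtain ⟨C, hC⟩ := (comap W.subtype X).exists_isCompl
  refine ⟨map W.subtype C, map_subtype_le _ _, ?_, ?_, ?_⟩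
  · have e1 := LinearEquiv.finrank_eq (Submodule.equivMapOfInjective W.subtype
      (Submodule.injective_subtype W) C)
    have e2 := LinearEquiv.finrank_eq (Submodule.comapSubtypeEquivOfLe hXW)
    have e3 := Submodule.finrank_add_eq_of_isCompl hC
    omega
  · rw [disjoint_def]
    intro x hx1 hx2
    obtain ⟨y, hy, rfl⟩ := mem_map.mp hx2
    have hyX : y ∈ comap W.subtype X := mem_comap.mpr hx1
    have : y ∈ (⊥ : Submodule F ↥W) := hC.inf_eq_bot ▸ mem_inf.mpr ⟨hyX, hy⟩
    rw [(Submodule.mem_bot F).mp this, map_zero]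
  · have : map W.subtype (comap W.subtype X) ⊔ map W.subtype C = map W.subtype ⊤ := by
      rw [← Submodule.map_sup, hC.sup_eq_top]
    rwa [Submodule.map_comap_subtype, inf_eq_right.mpr hXW, Submodule.map_top,
      range_subtype] at this

lemma main_adapted5 {n r s t : ℕ} {V₁ V₂ W : Submodule F V} (hc : IsCompl V₁ V₂)
    (h₁ : finrank F V₁ = n) (h₂ : finrank F V₂ = n) (hW : finrank F W = n)
    (hr : finrank F ↥(W ⊓ V₁) = r) (hs : finrank F ↥(W ⊓ V₂) = s)
    (ht : r + s + t = n) :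
    ∃ B : Basis ((Fin r ⊕ Fin t ⊕ Fin s) ⊕ (Fin s ⊕ Fin t ⊕ Fin r)) F V,
      span F (range (⇑B ∘ Sum.inl)) = V₁ ∧
      span F (range (⇑B ∘ Sum.inr)) = V₂ ∧
      span F (range (wfam5 ⇑B)) = W := by
  classical
  -- families a and b
  obtain ⟨hali, haspan⟩ := coe_basis_span5 (Module.finBasisOfFinrankEq F ↥(W ⊓ V₁) hr)
  obtain ⟨hbli, hbspan⟩ := coe_basis_span5 (Module.finBasisOfFinrankEq F ↥(W ⊓ V₂) hs)
  set a : Fin r → V := fun i => ↑(Module.finBasisOfFinrankEq F ↥(W ⊓ V₁) hr i) with ha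
  set b : Fin s → V := fun j => ↑(Module.finBasisOfFinrankEq F ↥(W ⊓ V₂) hs j) with hb
  -- the complement C of (W ⊓ V₁) ⊔ (W ⊓ V₂) inside W
  have hinfbot : (W ⊓ V₁) ⊓ (W ⊓ V₂) = ⊥ := by
    rw [← le_bot_iff]
    calc (W ⊓ V₁) ⊓ (W ⊓ V₂) ≤ V₁ ⊓ V₂ := inf_le_inf inf_le_right inf_le_right
    _ = ⊥ := hc.inf_eq_bot
  have hsupW : (W ⊓ V₁) ⊔ (W ⊓ V₂) ≤ W := sup_le inf_le_left inf_le_left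
  have hfrsup : finrank F ↥((W ⊓ V₁) ⊔ (W ⊓ V₂)) = r + s := by
    have := Submodule.finrank_sup_add_finrank_inf_eq (W ⊓ V₁) (W ⊓ V₂)
    rw [hinfbot, hr, hs] at this
    simpa using this
  obtain ⟨Cv, hCvW, hCvfr, hCvdisj, hCvsup⟩ :=
    compl_in_sub5 hsupW (m := t) (by rw [hfrsup, hW]; omega)
  obtain ⟨hcli, hcspan⟩ := coe_basis_span5 (Module.finBasisOfFinrankEq F ↥Cv hCvfr)
  set c : Fin t → V := fun k => ↑(Module.finBasisOfFinrankEq F ↥Cv hCvfr k) with hcdef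
  have hcW : ∀ k, c k ∈ W := fun k => hCvW (Submodule.coe_mem _)
  have hcdisj : Disjoint ((W ⊓ V₁) ⊔ (W ⊓ V₂)) (span F (range c)) := hcspan ▸ hCvdisj
  -- projections
  set p₁ := V₁.linearProjOfIsCompl V₂ hc with hp₁
  set p₂ := V₂.linearProjOfIsCompl V₁ hc.symm with hp₂
  set u : Fin t → V := fun k => ↑(p₁ (c k)) with hu
  set v : Fin t → V := fun k => ↑(p₂ (c k)) with hv
  have hcuv : ∀ k, u k + v k = c k := fun k =>
    Submodule.projection_add_projection_eq_self hc (c k)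
  -- linear independence of a ⊕ u and b ⊕ v
  have li_au : LinearIndependent F (Sum.elim a u) :=
    li_proj5 hc haspan hali hcW hcli hcdisj
  have li_bv : LinearIndependent F (Sum.elim b v) := by
    refine li_proj5 hc.symm hbspan hbli hcW hcli ?_
    rwa [sup_comm]
  -- complements within V₁ and V₂
  have hM₁le : span F (range (Sum.elim a u)) ≤ V₁ := by
    rw [span_le]
    rintro x ⟨(i | k), rfl⟩
    · exact ((haspan ▸ subset_span (mem_range_self i) : a i ∈ W ⊓ V₁)).2
    · exact Submodule.coe_mem (p₁ (c k))
  have hM₂le : span F (range (Sum.elim b v)) ≤ V₂ := by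
    rw [span_le]
    rintro x ⟨(j | k), rfl⟩
    · exact ((hbspan ▸ subset_span (mem_range_self j) : b j ∈ W ⊓ V₂)).2
    · exact Submodule.coe_mem (p₂ (c k))
  have hM₁fr : finrank F ↥(span F (range (Sum.elim a u))) = r + t := by
    rw [finrank_span_eq_card li_au]; simp
  have hM₂fr : finrank F ↥(span F (range (Sum.elim b v))) = s + t := by
    rw [finrank_span_eq_card li_bv]; simp
  obtain ⟨D₁, hD₁le, hD₁fr, hD₁disj, hD₁sup⟩ :=
    compl_in_sub5 hM₁le (m := s) (by rw [hM₁fr, h₁]; omega)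
  obtain ⟨D₂, hD₂le, hD₂fr, hD₂disj, hD₂sup⟩ :=
    compl_in_sub5 hM₂le (m := r) (by rw [hM₂fr, h₂]; omega)
  obtain ⟨hdli, hdspan⟩ := coe_basis_span5 (Module.finBasisOfFinrankEq F ↥D₁ hD₁fr)
  set d : Fin s → V := fun j => ↑(Module.finBasisOfFinrankEq F ↥D₁ hD₁fr j) with hd
  obtain ⟨heli, hespan⟩ := coe_basis_span5 (Module.finBasisOfFinrankEq F ↥D₂ hD₂fr)
  set e : Fin r → V := fun i => ↑(Module.finBasisOfFinrankEq F ↥D₂ hD₂fr i) with he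
  -- the families spanning V₁ and V₂
  set g₁ : (Fin r ⊕ Fin t) ⊕ Fin s → V := Sum.elim (Sum.elim a u) d with hg₁
  set g₂ : (Fin s ⊕ Fin t) ⊕ Fin r → V := Sum.elim (Sum.elim b v) e with hg₂
  have li_g₁ : LinearIndependent F g₁ :=
    li_au.sum_type hdli (by rw [hdspan]; exact hD₁disj)
  have li_g₂ : LinearIndependent F g₂ :=
    li_bv.sum_type heli (by rw [hespan]; exact hD₂disj)
  have sp_g₁ : span F (range g₁) = V₁ := by
    rw [hg₁, Set.Sum.elim_range, span_union, hdspan, hD₁sup]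
  have sp_g₂ : span F (range g₂) = V₂ := by
    rw [hg₂, Set.Sum.elim_range, span_union, hespan, hD₂sup]
  -- reindex
  set e₁ : (Fin r ⊕ Fin t ⊕ Fin s) ≃ ((Fin r ⊕ Fin t) ⊕ Fin s) :=
    (Equiv.sumAssoc _ _ _).symm with he₁
  set e₂ : (Fin s ⊕ Fin t ⊕ Fin r) ≃ ((Fin s ⊕ Fin t) ⊕ Fin r) :=
    (Equiv.sumAssoc _ _ _).symm with he₂
  set f₁ : Fin r ⊕ Fin t ⊕ Fin s → V := g₁ ∘ e₁ with hf₁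
  set f₂ : Fin s ⊕ Fin t ⊕ Fin r → V := g₂ ∘ e₂ with hf₂
  have li_f₁ : LinearIndependent F f₁ := li_g₁.comp e₁ e₁.injective
  have li_f₂ : LinearIndependent F f₂ := li_g₂.comp e₂ e₂.injective
  have rg₁ : range f₁ = range g₁ := by
    rw [hf₁, Set.range_comp, Equiv.range_eq_univ, Set.image_univ]
  have rg₂ : range f₂ = range g₂ := by
    rw [hf₂, Set.range_comp, Equiv.range_eq_univ, Set.image_univ]
  have sp_f₁ : span F (range f₁) = V₁ := by rw [rg₁, sp_g₁]
  have sp_f₂ : span F (range f₂) = V₂ := by rw [rg₂, sp_g₂]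
  obtain ⟨B, hB⟩ := combine_basis5 hc f₁ f₂ li_f₁ li_f₂ sp_f₁ sp_f₂
  refine ⟨B, ?_, ?_, ?_⟩
  · rw [show ⇑B ∘ Sum.inl = f₁ by funext i; rw [hB]; rfl, sp_f₁]
  · rw [show ⇑B ∘ Sum.inr = f₂ by funext i; rw [hB]; rfl, sp_f₂]
  · have hwf : wfam5 ⇑B = Sum.elim a (Sum.elim b c) := by
      funext x
      rcases x with i | j | k
      · rw [wfam5]; simp only [Sum.elim_inl]; rw [hB]; rfl
      · rw [wfam5]; simp only [Sum.elim_inr, Sum.elim_inl]; rw [hB]; rfl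
      · rw [wfam5]; simp only [Sum.elim_inr]
        rw [hB]
        show f₁ (.inr (.inl k)) + f₂ (.inr (.inl k)) = c k
        show u k + v k = c k
        exact hcuv k
    rw [hwf, Set.Sum.elim_range, Set.Sum.elim_range, span_union, span_union,
      haspan, hbspan, hcspan, ← sup_assoc]
    exact hCvsup

lemma bound5 {V₁ V₂ W : Submodule F V} (hc : IsCompl V₁ V₂) :
    finrank F ↥(W ⊓ V₁) + finrank F ↥(W ⊓ V₂) ≤ finrank F W := by
  have hinfbot : (W ⊓ V₁) ⊓ (W ⊓ V₂) = ⊥ := by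
    rw [← le_bot_iff]
    calc (W ⊓ V₁) ⊓ (W ⊓ V₂) ≤ V₁ ⊓ V₂ := inf_le_inf inf_le_right inf_le_right
    _ = ⊥ := hc.inf_eq_bot
  have h := Submodule.finrank_sup_add_finrank_inf_eq (W ⊓ V₁) (W ⊓ V₂)
  rw [hinfbot] at h
  simp only [finrank_bot, add_zero] at h
  have hle : finrank F ↥((W ⊓ V₁) ⊔ (W ⊓ V₂)) ≤ finrank F W :=
    Submodule.finrank_mono (sup_le inf_le_left inf_le_left)
  omega

end Build

end AuxStmt5

theorem stmt_5 (F : Type*) [Field F] [Finite F] (V : Type*)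
    [AddCommGroup V] [Module F V] [FiniteDimensional F V]
    (n : ℕ) (hV : Module.finrank F V = 2 * n)
    (V₁ V₂ : Submodule F V) (hc : IsCompl V₁ V₂)
    (h₁ : Module.finrank F V₁ = n) (h₂ : Module.finrank F V₂ = n) :
    (∀ W W' : Submodule F V,
        Module.finrank F W = n → Module.finrank F W' = n →
        ((∃ g : V ≃ₗ[F] V,
            Submodule.map (g : V →ₗ[F] V) V₁ = V₁ ∧
            Submodule.map (g : V →ₗ[F] V) V₂ = V₂ ∧
            Submodule.map (g : V →ₗ[F] V) W = W') ↔
          (Module.finrank F ↥(W ⊓ V₁) = Module.finrank F ↥(W' ⊓ V₁) ∧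
           Module.finrank F ↥(W ⊓ V₂) = Module.finrank F ↥(W' ⊓ V₂)))) ∧
    (∀ r s : ℕ,
        (∃ W : Submodule F V, Module.finrank F W = n ∧
            Module.finrank F ↥(W ⊓ V₁) = r ∧ Module.finrank F ↥(W ⊓ V₂) = s) ↔
          r + s ≤ n) := by
  constructor
  · intro W W' hWn hW'n
    constructor
    · rintro ⟨g, hg1, hg2, hg3⟩
      constructor
      · have h : W' ⊓ V₁ = Submodule.map (g : V →ₗ[F] V) (W ⊓ V₁) := by
          rw [Submodule.map_inf (g : V →ₗ[F] V) g.injective, hg1, hg3]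
        rw [h, LinearEquiv.finrank_map_eq]
      · have h : W' ⊓ V₂ = Submodule.map (g : V →ₗ[F] V) (W ⊓ V₂) := by
          rw [Submodule.map_inf (g : V →ₗ[F] V) g.injective, hg2, hg3]
        rw [h, LinearEquiv.finrank_map_eq]
    · rintro ⟨e1, e2⟩
      have hrs : finrank F ↥(W ⊓ V₁) + finrank F ↥(W ⊓ V₂) ≤ n := hWn ▸ bound5 hc
      obtain ⟨r, hr⟩ : ∃ r, finrank F ↥(W ⊓ V₁) = r := ⟨_, rfl⟩
      obtain ⟨s, hs⟩ : ∃ s, finrank F ↥(W ⊓ V₂) = s := ⟨_, rfl⟩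
      rw [hr] at e1 hrs
      rw [hs] at e2 hrs
      obtain ⟨B, hB1, hB2, hB3⟩ := main_adapted5 (t := n - r - s)
        hc h₁ h₂ hWn hr hs (by omega)
      obtain ⟨B', hB'1, hB'2, hB'3⟩ := main_adapted5 (t := n - r - s)
        hc h₁ h₂ hW'n e1.symm e2.symm (by omega)
      have key : ∀ x, (B.equiv B' (Equiv.refl _)) (B x) = B' x := fun x => by
        rw [Basis.equiv_apply]; rfl
      refine ⟨B.equiv B' (Equiv.refl _), ?_, ?_, ?_⟩
      · conv_lhs => rw [← hB1]
        rw [Submodule.map_span, ← Set.range_comp]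
        simp only [LinearEquiv.coe_coe]
        have hfun : (⇑(B.equiv B' (Equiv.refl _)) ∘ (⇑B ∘ Sum.inl)) = ⇑B' ∘ Sum.inl := by
          funext x; exact key _
        rw [hfun, hB'1]
      · conv_lhs => rw [← hB2]
        rw [Submodule.map_span, ← Set.range_comp]
        simp only [LinearEquiv.coe_coe]
        have hfun : (⇑(B.equiv B' (Equiv.refl _)) ∘ (⇑B ∘ Sum.inr)) = ⇑B' ∘ Sum.inr := by
          funext x; exact key _
        rw [hfun, hB'2]
      · conv_lhs => rw [← hB3]
        rw [Submodule.map_span, ← Set.range_comp]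
        simp only [LinearEquiv.coe_coe]
        have hfun : (⇑(B.equiv B' (Equiv.refl _)) ∘ wfam5 ⇑B) = wfam5 ⇑B' := by
          funext x
          rcases x with i | j | k
          · exact key _
          · exact key _
          · simp only [Function.comp_apply, wfam5, Sum.elim_inl, Sum.elim_inr, map_add, key]
        rw [hfun, hB'3]
  · intro r s
    constructor
    · rintro ⟨W, hWn, hr, hs⟩
      have := bound5 (W := W) hc
      omega
    · intro hrs
      obtain ⟨B, hB1, hB2⟩ := exists_adapted5 (r := r) (s := s) (t := n - r - s)
        hc (by rw [h₁]; omega) (by rw [h₂]; omega)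
      obtain ⟨d1, d2, d3⟩ := dims_of_adapted5 B
      rw [hB1] at d2
      rw [hB2] at d3
      exact ⟨span F (range (wfam5 ⇑B)), by rw [d1]; omega, d2, d3⟩
end

section
/- Let q be a prime power, n ≥ 1, and let C be a cyclic group of order q^{2n} − 1 (e.g. C = 𝔽_{q^{2n}}^×). Let θ : C → ℂ^× be a homomorphism such that the n homomorphisms θ^{q^{2i}} (x ↦ θ(x)^{q^{2i}} interpreted as θ composed with the power map x ↦ x^{q^{2i}}) for 0 ≤ i < n are pairwise distinct. If there exists an odd integer j with 1 ≤ j < 2n such that θ(x)·θ(x^{q^j}) = 1 for all x ∈ C, then n is odd. -/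
theorem stmt_12 (q n : ℕ) (hq : 2 ≤ q) (hn : 1 ≤ n)
    (C : Type*) [CommGroup C] [Fintype C] [IsCyclic C]
    (hC : Nat.card C = q ^ (2 * n) - 1)
    (θ : C →* ℂˣ)
    (hreg : ∀ i i' : ℕ, i < n → i' < n →
      θ.comp (powMonoidHom (q ^ (2 * i))) = θ.comp (powMonoidHom (q ^ (2 * i'))) → i = i')
    (hrel : ∃ j : ℕ, Odd j ∧ 1 ≤ j ∧ j < 2 * n ∧ ∀ x : C, θ x * θ (x ^ q ^ j) = 1) :
    Odd n := by
  obtain ⟨j, hodd, hj1, hj2, hrel⟩ := hrel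
  -- x ^ (q ^ (2n)) = x
  have hcard : ∀ x : C, x ^ (q ^ (2 * n)) = x := by
    intro x
    have h1 : x ^ (q ^ (2 * n) - 1) = 1 := by
      rw [← hC, Nat.card_eq_fintype_card]
      exact pow_card_eq_one
    have hpos : 1 ≤ q ^ (2 * n) := Nat.one_le_pow _ _ (by omega)
    calc x ^ (q ^ (2 * n)) = x ^ (q ^ (2 * n) - 1 + 1) := by rw [Nat.sub_add_cancel hpos]
    _ = x ^ (q ^ (2 * n) - 1) * x := by rw [pow_succ]
    _ = x := by rw [h1, one_mul]
  -- θ(x ^ q^(2j)) = θ x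
  have key : ∀ x : C, θ (x ^ q ^ (2 * j)) = θ x := by
    intro x
    have h1 := hrel x
    have h2 := hrel (x ^ q ^ j)
    have h3 : (x ^ q ^ j) ^ q ^ j = x ^ q ^ (2 * j) := by
      rw [← pow_mul, ← pow_add, two_mul]
    rw [h3] at h2
    have e1 : (θ x)⁻¹ = θ (x ^ q ^ j) := inv_eq_of_mul_eq_one_right h1
    rw [← e1] at h2
    exact (inv_mul_eq_one.mp h2).symm
  -- reduce exponent
  by_cases hjn : j < n
  · -- then hreg j 0 gives j = 0, contradiction
    exfalso
    have : θ.comp (powMonoidHom (q ^ (2 * j))) = θ.comp (powMonoidHom (q ^ (2 * 0))) := by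
      ext x
      simp only [MonoidHom.comp_apply, powMonoidHom_apply, mul_zero, pow_zero, pow_one]
      exact congrArg Units.val (key x)
    have := hreg j 0 hjn (by omega) this
    omega
  · -- j ≥ n; write j = n + m
    push_neg at hjn
    set m := j - n with hm
    have hjm : j = n + m := by omega
    have hmn : m < n := by omega
    have key2 : ∀ x : C, θ (x ^ q ^ (2 * m)) = θ x := by
      intro x
      have : x ^ q ^ (2 * j) = (x ^ q ^ (2 * n)) ^ q ^ (2 * m) := by
        rw [← pow_mul, ← pow_add, hjm]; ring_nf
      have k := key x
      rw [this, hcard] at k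
      exact k
    have : θ.comp (powMonoidHom (q ^ (2 * m))) = θ.comp (powMonoidHom (q ^ (2 * 0))) := by
      ext x
      simp only [MonoidHom.comp_apply, powMonoidHom_apply, mul_zero, pow_zero, pow_one]
      exact congrArg Units.val (key2 x)
    have hm0 := hreg m 0 hmn (by omega) this
    have : j = n := by omega
    rwa [this] at hodd
end
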